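/- Suppose f : X → Y is a function between compact Hausdorff spaces, B is a family of closed subsets of Y forming a base for the closed sets, and for each B ∈ B there exists a continuous map g_B : Y → Z_B to a compact Hausdorff space such that g_B ∘ f is continuous and B is g_B-saturated (g_B⁻¹[g_B[B]] = B). Then f is continuous. -/
import Mathlib

universe u

/-- Continuity criterion (level ≥ 0 part of Lemma 3.1): if `B` is a base for the
closed sets of `Y` and for each `B ∈ 𝓑` there is a continuous `g_B : Y → Z_B` with
`g_B ∘ f` continuous and `B` being `g_B`-saturated, then `f` is continuous. -/
theorem continuous_of_saturated_base
    {X Y : Type u} [TopologicalSpace X] [TopologicalSpace Y]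
    [CompactSpace X] [T2Space X] [CompactSpace Y] [T2Space Y]
    (f : X → Y) (𝓑 : Set (Set Y))
    (hclosed : ∀ B ∈ 𝓑, IsClosed B)
    (hbase : ∀ C : Set Y, IsClosed C → ∃ S ⊆ 𝓑, C = ⋂₀ S)
    (hsat : ∀ B ∈ 𝓑, ∃ (Z : Type u) (_ : TopologicalSpace Z)
      (_ : CompactSpace Z) (_ : T2Space Z) (g : Y → Z),
      Continuous g ∧ Continuous (g ∘ f) ∧ g ⁻¹' (g '' B) = B) :
    Continuous f := by
  rw [continuous_iff_isClosed]
  intro C hC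
  obtain ⟨S, hS, rfl⟩ := hbase C hC
  rw [Set.preimage_sInter]
  refine isClosed_biInter fun B hB => ?_
  obtain ⟨Z, _, _, _, g, hg, hgf, hsatB⟩ := hsat B (hS hB)
  have : f ⁻¹' B = (g ∘ f) ⁻¹' (g '' B) := by
    rw [Set.preimage_comp, hsatB]
  rw [this]
  exact (((hclosed B (hS hB)).isCompact.image hg).isClosed).preimage hgf
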